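/- arXiv:2103.04591 — 9 statements merged into one kernel-verified Lean document; each statement's English description precedes it below -/
import Mathlib

section
/- Let q be a prime power, n a positive integer, t a divisor of n, and u ≥ 1. The monomial f(x) = x^{q^u} over F_{q^n} is L-q^t-partially scattered (i.e., for all nonzero y, z in F_{q^n}, f(y)/y = f(z)/z implies y/z ∈ F_{q^t}) if and only if gcd(u,n) divides t. -/
lemma pow_sub_one_dvd_pow_sub_one (q a b : ℕ) (hab : a ∣ b) :
    q ^ a - 1 ∣ q ^ b - 1 := by
  obtain ⟨k, rfl⟩ := hab
  rw [pow_mul]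
  simpa using Nat.sub_dvd_pow_sub_pow (q ^ a) 1 k

lemma gcd_pow_sub_one (q : ℕ) (hq : 1 ≤ q) (m n : ℕ) :
    Nat.gcd (q ^ m - 1) (q ^ n - 1) = q ^ Nat.gcd m n - 1 := by
  induction m, n using Nat.gcd.induction with
  | H0 n => simp
  | H1 m n hm ih =>
    obtain ⟨c, hc⟩ : q ^ m - 1 ∣ q ^ (m * (n / m)) - 1 :=
      pow_sub_one_dvd_pow_sub_one q m _ ⟨n / m, rfl⟩
    have hB : 1 ≤ q ^ (n % m) := Nat.one_le_pow _ _ hq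
    have hkey : (q ^ m - 1) * (c * q ^ (n % m)) = q ^ n - q ^ (n % m) := by
      rw [← mul_assoc, ← hc, Nat.sub_mul, one_mul, ← pow_add]
      rw [Nat.add_comm, Nat.mod_add_div]
    have hle : q ^ (n % m) ≤ q ^ n := Nat.pow_le_pow_right hq (Nat.mod_le n m)
    have hsplit : q ^ n - 1 = (q ^ (n % m) - 1) + (c * q ^ (n % m)) * (q ^ m - 1) := by
      rw [mul_comm, hkey]; omega
    rw [hsplit, Nat.gcd_add_mul_right_right, Nat.gcd_comm, ih, Nat.gcd_rec m n]

lemma pow_sub_one_dvd_iff (q a b : ℕ) (hq : 2 ≤ q) :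
    q ^ a - 1 ∣ q ^ b - 1 ↔ a ∣ b := by
  constructor
  · intro h
    have h1 : Nat.gcd (q ^ a - 1) (q ^ b - 1) = q ^ a - 1 := Nat.gcd_eq_left h
    rw [gcd_pow_sub_one q (by omega)] at h1
    have h2 : q ^ Nat.gcd a b = q ^ a := by
      have := Nat.one_le_pow a q (by omega)
      have := Nat.one_le_pow (Nat.gcd a b) q (by omega)
      omega
    have := Nat.pow_right_injective hq h2
    exact this ▸ Nat.gcd_dvd_right a b
  · exact pow_sub_one_dvd_pow_sub_one q a b

/-- In a finite group that is cyclic, `(∀ x, x^a = 1 → x^b = 1) ↔ gcd a (card G) ∣ b`. -/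
lemma cyclic_pow_imp_pow_iff {G : Type*} [Group G] [Finite G] [IsCyclic G] (a b : ℕ) :
    (∀ x : G, x ^ a = 1 → x ^ b = 1) ↔ Nat.gcd a (Nat.card G) ∣ b := by
  obtain ⟨g, hg⟩ := IsCyclic.exists_generator (α := G)
  have hcardg : orderOf g = Nat.card G := orderOf_eq_card_of_forall_mem_zpowers hg
  set N := Nat.card G with hN
  have hNpos : 0 < N := Nat.card_pos
  constructor
  · intro h
    set d := Nat.gcd a N with hd
    have hdN : d ∣ N := Nat.gcd_dvd_right a N
    have hdpos : 0 < d := Nat.gcd_pos_of_pos_right a hNpos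
    set x := g ^ (N / d) with hx
    have hox : orderOf x = d := by
      rw [hx, orderOf_pow, hcardg, Nat.gcd_eq_right (Nat.div_dvd_of_dvd hdN),
        Nat.div_div_self hdN hNpos.ne']
    have hxa : x ^ a = 1 := by
      rw [← orderOf_dvd_iff_pow_eq_one, hox]; exact Nat.gcd_dvd_left a N
    have := h x hxa
    rwa [← orderOf_dvd_iff_pow_eq_one, hox] at this
  · intro h x hx
    have h1 : orderOf x ∣ a := orderOf_dvd_of_pow_eq_one hx
    have h2 : orderOf x ∣ N := orderOf_dvd_natCard x
    exact orderOf_dvd_iff_pow_eq_one.mp ((Nat.dvd_gcd h1 h2).trans h)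

/-- The monomial `x ^ q^u` over `F_{q^n}` is L-`q^t`-partially scattered iff `gcd(u,n) ∣ t`. -/
theorem monomial_L_partially_scattered_iff (q n t u : ℕ) (hq : IsPrimePow q) (hn : 0 < n)
    (ht : t ∣ n) (hu : 1 ≤ u)
    (F : Type) [Field F] [Fintype F] (hF : Fintype.card F = q ^ n) :
    (∀ y z : F, y ≠ 0 → z ≠ 0 →
        y ^ q ^ u / y = z ^ q ^ u / z → (y / z) ^ q ^ t = y / z) ↔
      Nat.gcd u n ∣ t := by
  have hq2 : 2 ≤ q := hq.two_le
  have htpos : 0 < t := Nat.pos_of_dvd_of_pos ht hn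
  have hqu : 1 ≤ q ^ u := Nat.one_le_pow _ _ (by omega)
  have hqt : 1 ≤ q ^ t := Nat.one_le_pow _ _ (by omega)
  have hcardU : Nat.card Fˣ = q ^ n - 1 := by
    rw [Nat.card_units, Nat.card_eq_fintype_card, hF]
  -- units version of the hypothesis power equations
  have unit_pow_iff : ∀ (x : Fˣ) (m : ℕ), 1 ≤ m →
      (x ^ (m - 1) = 1 ↔ (x : F) ^ m = x) := by
    intro x m hm
    constructor
    · intro h
      have : ((x ^ (m - 1) : Fˣ) : F) = 1 := by rw [h]; rfl
      push_cast at this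
      calc (x : F) ^ m = (x : F) ^ (m - 1) * x := by
            rw [← pow_succ]; congr 1; omega
        _ = x := by rw [this, one_mul]
    · intro h
      ext
      push_cast
      have hx0 : (x : F) ≠ 0 := Units.ne_zero x
      have : (x : F) ^ (m - 1) * x = 1 * x := by
        rw [one_mul, ← pow_succ]
        convert h using 2
        omega
      exact mul_right_cancel₀ hx0 this
  have key : (∀ y z : F, y ≠ 0 → z ≠ 0 →
      y ^ q ^ u / y = z ^ q ^ u / z → (y / z) ^ q ^ t = y / z) ↔
      (∀ x : Fˣ, x ^ (q ^ u - 1) = 1 → x ^ (q ^ t - 1) = 1) := by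
    constructor
    · intro H x hx
      rw [unit_pow_iff x _ hqu] at hx
      rw [unit_pow_iff x _ hqt]
      have hx0 : (x : F) ≠ 0 := Units.ne_zero x
      have := H (x : F) 1 hx0 one_ne_zero (by rw [hx, one_pow, div_self hx0, div_one])
      simpa using this
    · intro H y z hy hz hyz
      set x : Fˣ := Units.mk0 y hy / Units.mk0 z hz with hxdef
      have hxval : (x : F) = y / z := by
        simp [hxdef]
      have hx : x ^ (q ^ u - 1) = 1 := by
        rw [unit_pow_iff x _ hqu, hxval]
        field_simp at hyz
        rw [div_pow, div_eq_div_iff (pow_ne_zero _ hz) hz]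
        linear_combination hyz
      have := H x hx
      rw [unit_pow_iff x _ hqt, hxval] at this
      exact this
  rw [key, cyclic_pow_imp_pow_iff, hcardU,
    gcd_pow_sub_one q (by omega), pow_sub_one_dvd_iff _ _ _ hq2]
end

section
/- Let q be a prime power, n a positive integer, t a divisor of n, and u ≥ 1. The monomial f(x) = x^{q^u} over F_{q^n} is R-q^t-partially scattered (i.e., for all nonzero y, z in F_{q^n}, if f(y)/y = f(z)/z and y/z ∈ F_{q^t}, then y/z ∈ F_q) if and only if gcd(u,t) = 1. -/
section aux

variable {F : Type} [Field F]

/-- In a field, a nonzero `w` with `w ^ k = w` and `k ≥ 1` satisfies `w ^ (k-1) = 1`. -/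
lemma pow_sub_one_eq_one_of_pow_eq_self {w : F} (hw : w ≠ 0) {k : ℕ} (hk : 1 ≤ k)
    (h : w ^ k = w) : w ^ (k - 1) = 1 := by
  have : w ^ (k - 1) * w = 1 * w := by
    rw [one_mul, ← pow_succ, Nat.sub_add_cancel hk, h]
  exact mul_right_cancel₀ hw this

lemma pow_eq_self_of_pow_sub_one_eq_one {w : F} {k : ℕ} (hk : 1 ≤ k)
    (h : w ^ (k - 1) = 1) : w ^ k = w := by
  calc w ^ k = w ^ (k - 1) * w := by rw [← pow_succ, Nat.sub_add_cancel hk]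
    _ = w := by rw [h, one_mul]

end aux

/-- The monomial `x ^ q^u` over `F_{q^n}` is R-`q^t`-partially scattered iff `gcd(u,t) = 1`. -/
theorem monomial_R_partially_scattered_iff (q n t u : ℕ) (hq : IsPrimePow q) (hn : 0 < n)
    (ht : t ∣ n) (hu : 1 ≤ u)
    (F : Type) [Field F] [Fintype F] (hF : Fintype.card F = q ^ n) :
    (∀ y z : F, y ≠ 0 → z ≠ 0 →
        y ^ q ^ u / y = z ^ q ^ u / z → (y / z) ^ q ^ t = y / z → (y / z) ^ q = y / z) ↔
      Nat.gcd u t = 1 := by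
  have hq2 : 2 ≤ q := hq.two_le
  have hq1 : 1 ≤ q := le_trans one_le_two hq2
  have hqu1 : 1 ≤ q ^ u := Nat.one_le_pow _ _ (lt_of_lt_of_le zero_lt_one hq1)
  have hqt1 : 1 ≤ q ^ t := Nat.one_le_pow _ _ (lt_of_lt_of_le zero_lt_one hq1)
  constructor
  · -- forward: the condition implies gcd(u,t) = 1
    intro h
    by_contra hd
    set d := Nat.gcd u t with hdef
    have hdpos : 0 < d := Nat.gcd_pos_of_pos_left t hu
    have hd2 : 2 ≤ d := by omega
    have hdn : d ∣ n := (Nat.gcd_dvd_right u t).trans ht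
    -- q^d - 1 divides q^n - 1 = card Fˣ
    have hdvd : q ^ d - 1 ∣ q ^ n - 1 := by
      obtain ⟨k, hk⟩ := hdn
      simpa only [one_pow, ← pow_mul, ← hk] using Nat.sub_dvd_pow_sub_pow (q ^ d) 1 k
    have hcard : Nat.card Fˣ = q ^ n - 1 := by
      rw [Nat.card_units, Nat.card_eq_fintype_card, hF]
    obtain ⟨g, hg⟩ := IsCyclic.exists_ofOrder_eq_natCard (α := Fˣ)
    have hgord : orderOf g = q ^ n - 1 := by rw [hg, hcard]
    have hgne : orderOf g ≠ 0 := by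
      rw [hgord]
      have : 1 < q ^ n := Nat.one_lt_pow hn.ne' (by omega)
      omega
    set ζ : Fˣ := g ^ (orderOf g / (q ^ d - 1)) with hζ
    have hζord : orderOf ζ = q ^ d - 1 := by
      apply orderOf_pow_orderOf_div hgne
      rw [hgord]; exact hdvd
    set w : F := (ζ : F) with hw
    have hwne : w ≠ 0 := Units.ne_zero ζ
    have hword : orderOf w = q ^ d - 1 := by rw [hw, orderOf_units, hζord]
    have key : ∀ s : ℕ, d ∣ s → w ^ q ^ s = w := by
      intro s hs
      apply pow_eq_self_of_pow_sub_one_eq_one (Nat.one_le_pow _ _ (by omega))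
      apply orderOf_dvd_iff_pow_eq_one.mp
      rw [hword]
      obtain ⟨k, hk⟩ := hs
      simpa only [one_pow, ← pow_mul, ← hk] using Nat.sub_dvd_pow_sub_pow (q ^ d) 1 k
    have hwu : w ^ q ^ u = w := key u (Nat.gcd_dvd_left u t)
    have hwt : w ^ q ^ t = w := key t (Nat.gcd_dvd_right u t)
    have := h w 1 hwne one_ne_zero (by rw [hwu, one_pow, div_self hwne, div_self one_ne_zero])
      (by rw [div_one, hwt])
    rw [div_one] at this
    -- so w^q = w, hence orderOf w ∣ q - 1
    have hdvd' : q ^ d - 1 ∣ q - 1 := by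
      rw [← hword]
      exact orderOf_dvd_of_pow_eq_one (pow_sub_one_eq_one_of_pow_eq_self hwne hq1 this)
    have hle : q ^ d - 1 ≤ q - 1 := Nat.le_of_dvd (by omega) hdvd'
    have : q ^ 2 ≤ q ^ d := Nat.pow_le_pow_right (by omega) hd2
    have h2 : q * q ≤ q ^ d := by rwa [pow_two] at this
    have h3 : 1 ≤ q ^ d := Nat.one_le_pow _ _ (by omega)
    have h4 : q ^ d ≤ q := by omega
    nlinarith
  · -- backward: gcd(u,t)=1 implies the condition
    intro hco y z hy hz h1 h2
    set w : F := y / z with hw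
    have hwne : w ≠ 0 := div_ne_zero hy hz
    have hwu : w ^ q ^ u = w := by
      field_simp at h1
      rw [hw, div_pow, div_eq_div_iff (pow_ne_zero _ hz) hz]
      linear_combination h1
    set ζ : Fˣ := Units.mk0 w hwne with hζ
    set m : ℕ := orderOf ζ with hm
    have hmpos : 0 < m := orderOf_pos ζ
    have hmdvd : ∀ s : ℕ, w ^ q ^ s = w → m ∣ q ^ s - 1 := by
      intro s hws
      apply orderOf_dvd_iff_pow_eq_one.mpr
      apply Units.ext
      rw [Units.val_pow_eq_pow_val, Units.val_one]
      exact pow_sub_one_eq_one_of_pow_eq_self hwne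
        (Nat.one_le_pow _ _ (by omega)) hws
    have hmu : m ∣ q ^ u - 1 := hmdvd u hwu
    have hmt : m ∣ q ^ t - 1 := hmdvd t h2
    -- then q ≡ 1 mod m
    have hcast : ∀ s : ℕ, m ∣ q ^ s - 1 → (q : ZMod m) ^ s = 1 := by
      intro s hs
      have h1s : 1 ≤ q ^ s := Nat.one_le_pow _ _ (by omega)
      have : ((q ^ s - 1 : ℕ) : ZMod m) = 0 := (ZMod.natCast_eq_zero_iff _ _).mpr hs
      rw [Nat.cast_sub h1s, Nat.cast_pow, Nat.cast_one, sub_eq_zero] at this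
      exact this
    have hq1m : (q : ZMod m) = 1 := by
      have := (pow_gcd_eq_one (a := (q : ZMod m))).mpr ⟨hcast u hmu, hcast t hmt⟩
      rwa [hco, pow_one] at this
    have hmq : m ∣ q - 1 := by
      rw [← ZMod.natCast_eq_zero_iff, Nat.cast_sub hq1, Nat.cast_one, hq1m, sub_self]
    have : w ^ (q - 1) = 1 := by
      have := orderOf_dvd_iff_pow_eq_one.mp hmq
      have := congrArg (Units.val) this
      rwa [Units.val_pow_eq_pow_val, Units.val_one] at this
    rw [hw] at *
    exact pow_eq_self_of_pow_sub_one_eq_one hq1 this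
end

section
/- Let f be an F_q-linear map on F_{q^n} and for ρ ∈ F_{q^n}^* define f_ρ(x) = f(ρx) − ρ f(x). Then f is R-q^t-partially scattered if and only if f_ρ is bijective on F_{q^n} for every ρ ∈ F_{q^t} \ F_q. -/
/-- An `F_q`-linear map `f` on `F_{q^n}` is R-`q^t`-partially scattered iff
`f_ρ(x) = f(ρx) - ρ f(x)` is bijective for every `ρ ∈ F_{q^t} \ F_q`. -/
theorem R_partially_scattered_iff_bijective (q n t : ℕ) (hq : IsPrimePow q) (hn : 0 < n)
    (ht : t ∣ n)
    (F : Type) [Field F] [Fintype F] (hF : Fintype.card F = q ^ n)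
    (f : F → F) (hadd : ∀ x y, f (x + y) = f x + f y)
    (hsmul : ∀ c x : F, c ^ q = c → f (c * x) = c * f x) :
    (∀ y z : F, y ≠ 0 → z ≠ 0 →
        f y / y = f z / z → (y / z) ^ q ^ t = y / z → (y / z) ^ q = y / z) ↔
      ∀ ρ : F, ρ ^ q ^ t = ρ → ¬ ρ ^ q = ρ →
        Function.Bijective (fun x => f (ρ * x) - ρ * f x) := by
  have hf0 : f 0 = 0 := by
    have h := hadd 0 0
    rw [add_zero] at h
    exact (left_eq_add.mp h)
  have hsub : ∀ x y : F, f (x - y) = f x - f y := by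
    intro x y
    have h := hadd (x - y) y
    rw [sub_add_cancel] at h
    rw [h]; ring
  constructor
  · intro h ρ hρt hρq
    have hρ0 : ρ ≠ 0 := by
      rintro rfl
      exact hρq (zero_pow hq.pos.ne')
    rw [← Finite.injective_iff_bijective]
    intro a b hab
    by_contra hne
    have hx : a - b ≠ 0 := sub_ne_zero.mpr hne
    simp only at hab
    have hg : f (ρ * (a - b)) = ρ * f (a - b) := by
      rw [mul_sub, hsub, hsub]
      linear_combination hab
    have hy0 : ρ * (a - b) ≠ 0 := mul_ne_zero hρ0 hx
    have hdiv : ρ * (a - b) / (a - b) = ρ := by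
      field_simp
    have hfrac : f (ρ * (a - b)) / (ρ * (a - b)) = f (a - b) / (a - b) := by
      rw [hg]
      field_simp
    have := h (ρ * (a - b)) (a - b) hy0 hx hfrac (by rw [hdiv]; exact hρt)
    rw [hdiv] at this
    exact hρq this
  · intro h y z hy hz hfz hqt
    by_contra hq'
    have hbij := h (y / z) hqt hq'
    have hfy : f y = (y / z) * f z := by
      field_simp at hfz ⊢
      linear_combination hfz
    have h0 : (fun x => f (y / z * x) - y / z * f x) z
        = (fun x => f (y / z * x) - y / z * f x) 0 := by
      simp only [mul_zero, hf0, sub_zero, div_mul_cancel₀ y hz]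
      rw [hfy]; ring
    have := hbij.injective h0
    exact hz this
end

section
/- Let f be an F_q-linear map on F_{q^n} and for ρ ∈ F_{q^n}^* define f_ρ(x) = f(ρx) − ρ f(x). Then f is L-q^t-partially scattered if and only if f_ρ is bijective on F_{q^n} for every ρ ∈ F_{q^n} \ F_{q^t}. -/
/-- An `F_q`-linear map `f` on `F_{q^n}` is L-`q^t`-partially scattered iff
`f_ρ(x) = f(ρx) - ρ f(x)` is bijective for every `ρ ∈ F_{q^n} \ F_{q^t}`. -/
theorem L_partially_scattered_iff_bijective (q n t : ℕ) (hq : IsPrimePow q) (hn : 0 < n)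
    (ht : t ∣ n)
    (F : Type) [Field F] [Fintype F] (hF : Fintype.card F = q ^ n)
    (f : F → F) (hadd : ∀ x y, f (x + y) = f x + f y)
    (hsmul : ∀ c x : F, c ^ q = c → f (c * x) = c * f x) :
    (∀ y z : F, y ≠ 0 → z ≠ 0 →
        f y / y = f z / z → (y / z) ^ q ^ t = y / z) ↔
      ∀ ρ : F, ¬ ρ ^ q ^ t = ρ →
        Function.Bijective (fun x => f (ρ * x) - ρ * f x) := by
  have hqt : q ^ t ≠ 0 := (pow_pos hq.pos t).ne'
  have hf0 : f 0 = 0 := by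
    have h := hadd 0 0
    simp only [add_zero] at h
    exact (right_eq_add.mp h)
  have hsub : ∀ x y, f (x - y) = f x - f y := by
    intro x y
    have h := hadd y (x - y)
    rw [add_sub_cancel] at h
    exact eq_sub_of_add_eq' h.symm
  constructor
  · intro hps ρ hρ
    have hρ0 : ρ ≠ 0 := by
      rintro rfl
      exact hρ (by simp [zero_pow hqt])
    have hinj : Function.Injective (fun x => f (ρ * x) - ρ * f x) := by
      intro a b hab
      simp only at hab
      by_contra hne
      have hw : a - b ≠ 0 := sub_ne_zero.mpr hne
      have h1 : f (ρ * (a - b)) = ρ * f (a - b) := by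
        rw [mul_sub, hsub, hsub]
        linear_combination hab
      have hq1 : f (ρ * (a - b)) / (ρ * (a - b)) = f (a - b) / (a - b) := by
        rw [h1, mul_div_mul_left _ _ hρ0]
      have := hps (ρ * (a - b)) (a - b) (mul_ne_zero hρ0 hw) hw hq1
      rw [mul_div_assoc, div_self hw, mul_one] at this
      exact hρ this
    exact Finite.injective_iff_bijective.mp hinj
  · intro hb y z hy hz hquot
    by_contra hne
    have hbij := hb (y / z) hne
    have hcross : f y * z = f z * y := (div_eq_div_iff hy hz).mp hquot
    have h0 : f (y / z * z) - y / z * f z = 0 := by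
      rw [div_mul_cancel₀ _ hz, sub_eq_zero, div_mul_eq_mul_div, eq_div_iff hz]
      linear_combination hcross
    have hz0 : z = 0 := hbij.injective (a₁ := z) (a₂ := 0) (by simp [hf0, h0])
    exact hz hz0
end

section
/- Let f be an F_q-linear map on F_{q^n}. Then f is scattered (for all nonzero y, z, f(y)/y = f(z)/z implies y/z ∈ F_q) if and only if the map f_ρ(x) = f(ρx) − ρf(x) is bijective on F_{q^n} for every ρ ∈ F_{q^n} \ F_q. -/
/-- An `F_q`-linear map `f` on `F_{q^n}` is scattered iff
`f_ρ(x) = f(ρx) - ρ f(x)` is bijective for every `ρ ∈ F_{q^n} \ F_q`. -/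
theorem scattered_iff_bijective (q n : ℕ) (hq : IsPrimePow q) (hn : 0 < n)
    (F : Type) [Field F] [Fintype F] (hF : Fintype.card F = q ^ n)
    (f : F → F) (hadd : ∀ x y, f (x + y) = f x + f y)
    (hsmul : ∀ c x : F, c ^ q = c → f (c * x) = c * f x) :
    (∀ y z : F, y ≠ 0 → z ≠ 0 →
        f y / y = f z / z → (y / z) ^ q = y / z) ↔
      ∀ ρ : F, ¬ ρ ^ q = ρ →
        Function.Bijective (fun x => f (ρ * x) - ρ * f x) := by
  classical
  have hq1 : 1 ≤ q := hq.pos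
  have f0 : f 0 = 0 := by
    have h := hadd 0 0
    rw [add_zero] at h
    have : f 0 + f 0 = f 0 + 0 := by rw [add_zero]; exact h.symm
    exact add_left_cancel this
  have hfsub : ∀ x y, f (x - y) = f x - f y := by
    intro x y
    have h := hadd (x - y) y
    rw [sub_add_cancel] at h
    linear_combination -h
  constructor
  · intro hs ρ hρ
    have hρ0 : ρ ≠ 0 := by
      rintro rfl
      exact hρ (by simp [zero_pow (by omega : q ≠ 0)])
    have hinj : Function.Injective (fun x => f (ρ * x) - ρ * f x) := by
      intro a b hab
      simp only at hab
      by_contra hne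
      set x := a - b with hx
      have hx0 : x ≠ 0 := sub_ne_zero.mpr hne
      have hker : f (ρ * x) = ρ * f x := by
        have : ρ * x = ρ * a - ρ * b := by ring
        rw [this, hfsub, hx, hfsub]
        linear_combination hab
      have h1 : f (ρ * x) / (ρ * x) = f x / x := by
        rw [hker]
        field_simp
      have h2 := hs (ρ * x) x (mul_ne_zero hρ0 hx0) hx0 h1
      rw [mul_div_assoc, div_self hx0, mul_one] at h2
      exact hρ h2
    exact Finite.injective_iff_bijective.mp hinj
  · intro hb y z hy hz hyz
    by_contra hne
    have hbij := hb (y / z) hne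
    have hkey : f (y / z * z) - y / z * f z = 0 := by
      rw [div_mul_cancel₀ y hz]
      rw [div_eq_div_iff (by exact hy) (by exact hz)] at hyz
      field_simp
      linear_combination hyz
    have h0 : f (y / z * 0) - y / z * f 0 = 0 := by simp [f0]
    have := hbij.injective (a₁ := z) (a₂ := 0) (by show f (y / z * z) - y / z * f z = f (y / z * 0) - y / z * f 0; rw [hkey, h0])
    exact hz this
end

section
/- The F_{q^t}-linearized polynomial g(x) = α x + β x^{q^t} + x^{q^{2t}} over F_{q^{3t}} is bijective on F_{q^{3t}} if and only if N_{q^{3t}/q^t}(α) + N_{q^{3t}/q^t}(β) − Tr_{q^{3t}/q^t}(α β^{q^t}) + 1 ≠ 0. -/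
open Polynomial in
lemma aux_three_term_zero {F : Type} [Field F] [Fintype F] {c₀ c₁ c₂ : F} {m n : ℕ}
    (h1m : 1 < m) (hmn : m < n) (hn : n < Fintype.card F)
    (h : ∀ x : F, c₀ * x + c₁ * x ^ m + c₂ * x ^ n = 0) :
    c₀ = 0 ∧ c₁ = 0 ∧ c₂ = 0 := by
  set P : F[X] := C c₀ * X + C c₁ * X ^ m + C c₂ * X ^ n with hP
  have hdeg : P.natDegree < Fintype.card F := by
    have h1 : (C c₀ * X).natDegree ≤ n := by
      apply le_trans (natDegree_C_mul_le _ _)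
      simpa using le_of_lt (lt_trans h1m hmn)
    have h2 : (C c₁ * X ^ m).natDegree ≤ n := by
      apply le_trans (natDegree_C_mul_le _ _)
      simpa using le_of_lt hmn
    have h3 : (C c₂ * X ^ n).natDegree ≤ n := by
      apply le_trans (natDegree_C_mul_le _ _)
      simp
    calc P.natDegree ≤ n := by
          apply le_trans (natDegree_add_le _ _)
          exact max_le (le_trans (natDegree_add_le _ _) (max_le h1 h2)) h3
      _ < Fintype.card F := hn
  have hP0 : P = 0 := by
    apply Polynomial.eq_zero_of_forall_eval_zero_of_natDegree_lt_card
    · intro r; simp [hP, h r]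
    · rw [Cardinal.mk_fintype]; exact_mod_cast hdeg
  have hm1 : m ≠ 1 := Nat.ne_of_gt h1m
  have hn1 : n ≠ 1 := Nat.ne_of_gt (lt_trans h1m hmn)
  have hmn' : m ≠ n := Nat.ne_of_lt hmn
  have hc0 : c₀ = 0 := by
    have := congrArg (fun p => Polynomial.coeff p 1) hP0
    simpa [hP, coeff_X_pow, coeff_X, hm1.symm, hn1.symm] using this
  have hc1 : c₁ = 0 := by
    have := congrArg (fun p => Polynomial.coeff p m) hP0
    simpa [hP, coeff_X_pow, coeff_X, hm1, hm1.symm, hmn'] using this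
  have hc2 : c₂ = 0 := by
    have := congrArg (fun p => Polynomial.coeff p n) hP0
    simpa [hP, coeff_X_pow, coeff_X, hn1, hn1.symm, hmn'.symm] using this
  exact ⟨hc0, hc1, hc2⟩

lemma aux_hilbert90 {F : Type} [Field F] [Fintype F] (Q : ℕ) (hQ : 1 < Q)
    (hcard : Fintype.card F = Q ^ 3) (α : F) (hα : α ≠ 0)
    (hN : α * α ^ Q * α ^ Q ^ 2 = 1) :
    ∃ y : F, y ≠ 0 ∧ y ^ Q = α * y := by
  classical
  set u : Fˣ := Units.mk0 α hα with hu
  have hNu : u ^ (1 + Q + Q ^ 2) = 1 := by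
    ext
    push_cast [pow_add]
    simpa [hu, mul_assoc] using hN
  obtain ⟨g, hg⟩ := IsCyclic.exists_generator (α := Fˣ)
  have horder : orderOf g = Q ^ 3 - 1 := by
    rw [orderOf_eq_card_of_forall_mem_zpowers hg, Nat.card_eq_fintype_card,
      Fintype.card_units, hcard]
  obtain ⟨k, hk0⟩ := hg u
  have hk : g ^ k = u := hk0
  have hdvd : ((Q : ℤ) ^ 3 - 1) ∣ k * (1 + Q + Q ^ 2) := by
    have h1 : g ^ (k * ((1 : ℤ) + Q + Q ^ 2)) = 1 := by
      rw [zpow_mul, hk]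
      have h3 : ((1 : ℤ) + Q + Q ^ 2) = ((1 + Q + Q ^ 2 : ℕ) : ℤ) := by push_cast; ring
      rw [h3, zpow_natCast, hNu]
    have h2 := orderOf_dvd_iff_zpow_eq_one.mpr h1
    rw [horder] at h2
    have hcast : ((Q ^ 3 - 1 : ℕ) : ℤ) = (Q : ℤ) ^ 3 - 1 := by
      have : 1 ≤ Q ^ 3 := Nat.one_le_pow _ _ (by omega)
      push_cast [this]; ring
    rw [← hcast]
    exact_mod_cast h2
  have hfac : ((Q : ℤ) ^ 3 - 1) = ((Q : ℤ) - 1) * (1 + Q + Q ^ 2) := by ring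
  rw [hfac] at hdvd
  have hm0 : ((1 : ℤ) + Q + Q ^ 2) ≠ 0 := by positivity
  have hdvd2 : ((Q : ℤ) - 1) ∣ k := (mul_dvd_mul_iff_right hm0).mp hdvd
  obtain ⟨j, hj⟩ := hdvd2
  refine ⟨((g ^ j : Fˣ) : F), Units.ne_zero _, ?_⟩
  have hvy : (g ^ j) ^ ((Q : ℤ) - 1) = u := by
    rw [← zpow_mul, mul_comm, ← hj, hk]
  have hzz : (g ^ j) ^ (Q : ℤ) = u * (g ^ j) := by
    have h4 : (g ^ j) ^ ((Q : ℤ) - 1 + 1) = u * (g ^ j) := by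
      rw [zpow_add, hvy, zpow_one]
    simpa using h4
  have hQn : (g ^ j) ^ Q = u * g ^ j := by
    rw [← zpow_natCast]; exact hzz
  have hfin := congrArg Units.val hQn
  push_cast at hfin
  simpa [hu] using hfin

/-- The `F_{q^t}`-linearized polynomial `g(x) = α x + β x^{q^t} + x^{q^{2t}}` is bijective on
`F_{q^{3t}}` iff `N(α) + N(β) - Tr(α β^{q^t}) + 1 ≠ 0`. -/
theorem trinomial_bijective_iff (q t : ℕ) (hq : IsPrimePow q) (ht : 0 < t)
    (F : Type) [Field F] [Fintype F] (hF : Fintype.card F = q ^ (3 * t)) (α β : F) :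
    Function.Bijective (fun x : F => α * x + β * x ^ q ^ t + x ^ q ^ (2 * t)) ↔
      α * α ^ q ^ t * α ^ q ^ (2 * t) + β * β ^ q ^ t * β ^ q ^ (2 * t) -
          (α * β ^ q ^ t + (α * β ^ q ^ t) ^ q ^ t + (α * β ^ q ^ t) ^ q ^ (2 * t)) + 1 ≠ 0 := by
  classical
  obtain ⟨p, s, hp, hs, rfl⟩ := hq
  have hp' : Nat.Prime p := Nat.prime_iff.mpr hp
  haveI : Fact p.Prime := ⟨hp'⟩
  have hst : 0 < s * t := Nat.mul_pos hs ht
  have hchar : CharP F p := by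
    obtain ⟨n, hpn, hcardn⟩ := FiniteField.card F (ringChar F)
    have h1 : p ∣ Fintype.card F := by
      rw [hF, ← pow_mul]
      exact dvd_pow_self p (by positivity)
    rw [hcardn] at h1
    have h2 : p ∣ ringChar F := hp'.dvd_of_dvd_pow h1
    have h3 : p = ringChar F := (Nat.prime_dvd_prime_iff_eq hp' hpn).mp h2
    rw [h3]; exact ringChar.charP F
  haveI := hchar
  set Q := p ^ (s * t) with hQdef
  have hQ1 : 1 < Q := Nat.one_lt_pow (by omega) hp'.one_lt
  have hQt : (p ^ s) ^ t = Q := by rw [hQdef, ← pow_mul]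
  have hQ2 : (p ^ s) ^ (2 * t) = Q ^ 2 := by
    rw [hQdef, ← pow_mul, ← pow_mul]; congr 1; ring
  have hcard : Fintype.card F = Q ^ 3 := by
    rw [hF, hQdef, ← pow_mul, ← pow_mul]; congr 1; ring
  have hQQ2 : Q < Q ^ 2 := by nlinarith
  have hQ2card : Q ^ 2 < Fintype.card F := by
    rw [hcard]; exact Nat.pow_lt_pow_right hQ1 (by norm_num)
  -- the Frobenius-power ring hom
  let φ : F →+* F :=
    { toFun := fun x => x ^ Q,
      map_one' := one_pow _,
      map_mul' := fun x y => mul_pow x y Q,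
      map_zero' := zero_pow (by omega),
      map_add' := fun x y => add_pow_char_pow x y p (s * t) }
  have hpowφ : ∀ x : F, x ^ Q = φ x := fun _ => rfl
  have hφ3 : ∀ x : F, φ (φ (φ x)) = x := by
    intro x
    show ((x ^ Q) ^ Q) ^ Q = x
    rw [← pow_mul, ← pow_mul]
    have h5 : Q * (Q * Q) = Fintype.card F := by rw [hcard]; ring
    rw [h5, FiniteField.pow_card]
  have hφ2 : ∀ x : F, x ^ Q ^ 2 = φ (φ x) := by
    intro x
    rw [show Q ^ 2 = Q * Q from sq Q, pow_mul x Q Q]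
    simp only [hpowφ]
  have hinjφ : Function.Injective φ := φ.injective
  simp only [hQt, hQ2, hφ2, hpowφ]
  set g : F → F := fun x => α * x + β * φ x + φ (φ x) with hgdef
  set D : F := α * φ α * φ (φ α) + β * φ β * φ (φ β) -
      (α * φ β + φ (α * φ β) + φ (φ (α * φ β))) + 1 with hDdef
  show Function.Bijective g ↔ D ≠ 0
  set M : F → F := fun x =>
    (φ α * φ (φ α) - φ β) * x + (1 - β * φ (φ α)) * φ x + (β * φ β - φ α) * φ (φ x) with hMdef
  have hMg : ∀ x, M (g x) = D * x := by
    intro x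
    rw [hMdef, hgdef, hDdef]
    simp only [map_add, map_mul, map_sub, map_one, hφ3]
    ring
  have hgM : ∀ x, g (M x) = D * x := by
    intro x
    rw [hMdef, hgdef, hDdef]
    simp only [map_add, map_mul, map_sub, map_one, hφ3]
    ring
  have hg0 : g 0 = 0 := by rw [hgdef]; simp
  constructor
  · intro hbij hD0
    by_cases hM0 : ∀ x, M x = 0
    · -- all coefficients of M vanish
      have hcs : (φ α * φ (φ α) - φ β) = 0 ∧ (1 - β * φ (φ α)) = 0 ∧ (β * φ β - φ α) = 0 := by
        apply aux_three_term_zero hQ1 hQQ2 hQ2card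
        intro x
        rw [hφ2, hpowφ]
        exact hM0 x
      obtain ⟨hc0, hc1, hc2⟩ := hcs
      have hβa2 : β * φ (φ α) = 1 := by
        have := sub_eq_zero.mp hc1; exact this.symm
      have hαne : α ≠ 0 := by
        intro h
        rw [h] at hβa2
        simp at hβa2
      have hφαne : φ α ≠ 0 := fun h => hαne (hinjφ (by simpa using h))
      have hb1 : φ β = φ α * φ (φ α) := (sub_eq_zero.mp hc0).symm
      have hβ : β = α * φ α := by
        have := congrArg (fun z => φ (φ z)) hb1
        simpa [map_mul, hφ3] using this
      have hNα : α * φ α * φ (φ α) = 1 := by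
        have h6 : β * φ β = φ α := sub_eq_zero.mp hc2
        rw [hβ, map_mul] at h6
        apply mul_left_cancel₀ hφαne
        rw [mul_one]
        linear_combination h6
      have hN' : α * α ^ Q * α ^ Q ^ 2 = 1 := by
        rw [hφ2, hpowφ]; exact hNα
      obtain ⟨y, hy0, hyQ⟩ := aux_hilbert90 Q hQ1 hcard α hαne hN'
      have hyφ : φ y = α * y := by rw [← hpowφ]; exact hyQ
      have hφyne : φ y ≠ 0 := fun h => hy0 (hinjφ (by simpa using h))
      have hφφyne : φ (φ y) ≠ 0 := fun h => hφyne (hinjφ (by simpa using h))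
      -- find a nonzero trace-zero element
      have hz : ∃ z : F, z ≠ 0 ∧ z + φ z + φ (φ z) = 0 := by
        by_contra hcon
        push_neg at hcon
        have hTrinj : Function.Injective (fun z : F => z + φ z + φ (φ z)) := by
          intro z1 z2 h12
          simp only [] at h12
          by_contra hne
          have hsub : (z1 - z2) + φ (z1 - z2) + φ (φ (z1 - z2)) = 0 := by
            simp only [map_sub]
            linear_combination h12
          exact hcon (z1 - z2) (sub_ne_zero.mpr hne) hsub
        have hfix : ∀ x : F, φ x = x := by
          intro x
          apply hTrinj
          simp only []
          rw [hφ3]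
          ring
        have h7 : ∀ x : F, (-1 : F) * x + (1 : F) * x ^ Q + (0 : F) * x ^ Q ^ 2 = 0 := by
          intro x
          have hx : x ^ Q = x := by rw [hpowφ]; exact hfix x
          rw [hx]; ring
        obtain ⟨h8, -, -⟩ := aux_three_term_zero hQ1 hQQ2 hQ2card h7
        norm_num at h8
      obtain ⟨z, hz0, hztr⟩ := hz
      set x0 : F := (φ y)⁻¹ * z with hx0def
      have hx0ne : x0 ≠ 0 := mul_ne_zero (inv_ne_zero hφyne) hz0
      have hφφy : φ (φ y) = φ α * (α * y) := by rw [hyφ, map_mul, hyφ]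
      have hgx0 : g x0 = 0 := by
        rw [hgdef, hx0def]
        simp only [map_mul, map_inv₀]
        rw [hφ3, hβ, hφφy, hyφ]
        have e1 : α * ((α * y)⁻¹ * z) = y⁻¹ * z := by
          rw [mul_inv]
          field_simp
        have e2 : α * φ α * ((φ α * (α * y))⁻¹ * φ z) = y⁻¹ * φ z := by
          rw [mul_inv, mul_inv]
          field_simp
        have hcalc : α * ((α * y)⁻¹ * z) + α * φ α * ((φ α * (α * y))⁻¹ * φ z)
            + y⁻¹ * φ (φ z) = y⁻¹ * (z + φ z + φ (φ z)) := by
          rw [e1, e2]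
          ring
        rw [hcalc, hztr, mul_zero]
      exact hx0ne (hbij.injective (hgx0.trans hg0.symm))
    · push_neg at hM0
      obtain ⟨x, hx⟩ := hM0
      have h1 : g (M x) = g 0 := by rw [hgM x, hD0, zero_mul, hg0]
      exact hx (hbij.injective h1)
  · intro hD
    rw [← Finite.injective_iff_bijective]
    intro x y hxy
    have h1 := hMg x
    rw [hxy, hMg y] at h1
    exact (mul_left_cancel₀ hD h1.symm)
end

section
/- Let n be odd, gcd(s,n)=1, and δ ∈ F_{q^n} with N_{q^n/q}(δ) = 1. Then for every ρ ∈ F_{q^n} \ F_q there exists x₀ ∈ F_{q^n}^* with f(ρ x₀)/( ρ x₀) = f(x₀)/x₀ where f(x) = x^{q^{s(n−1)}} + δ x^{q^s}; in particular the LP polynomial f is not scattered. -/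
lemma LP_aux_gcd_dvd {q a b : ℕ} (hq : 1 ≤ q) (hab : Nat.gcd a b = 1) :
    Nat.gcd (q ^ a - 1) (q ^ b - 1) ∣ q - 1 := by
  set d := Nat.gcd (q ^ a - 1) (q ^ b - 1) with hd
  have h1 : d ∣ q ^ a - 1 := Nat.gcd_dvd_left _ _
  have h2 : d ∣ q ^ b - 1 := Nat.gcd_dvd_right _ _
  have ha : (q : ZMod d) ^ a = 1 := by
    have h3 : (1 : ℕ) ≡ q ^ a [MOD d] := (Nat.modEq_iff_dvd' (Nat.one_le_pow _ _ hq)).2 h1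
    have h4 := (ZMod.natCast_eq_natCast_iff _ _ _).2 h3
    push_cast at h4
    exact h4.symm
  have hb : (q : ZMod d) ^ b = 1 := by
    have h3 : (1 : ℕ) ≡ q ^ b [MOD d] := (Nat.modEq_iff_dvd' (Nat.one_le_pow _ _ hq)).2 h2
    have h4 := (ZMod.natCast_eq_natCast_iff _ _ _).2 h3
    push_cast at h4
    exact h4.symm
  have h5 := pow_gcd_eq_one.2 ⟨ha, hb⟩
  rw [hab, pow_one] at h5
  have h6 : ((q : ℕ) : ZMod d) = ((1 : ℕ) : ZMod d) := by push_cast; exact h5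
  have h7 := (ZMod.natCast_eq_natCast_iff _ _ _).1 h6
  exact (Nat.modEq_iff_dvd' hq).1 h7.symm

/-- If `n` is odd, `gcd(s,n) = 1` and `N_{q^n/q}(δ) = 1`, then for every
`ρ ∈ F_{q^n} \ F_q` there is `x₀ ≠ 0` with `f(ρ x₀)/(ρ x₀) = f(x₀)/x₀`, where
`f(x) = x^{q^{s(n-1)}} + δ x^{q^s}`; in particular the LP polynomial `f` is not scattered. -/
theorem LP_not_scattered (q n s : ℕ) (hq : IsPrimePow q) (hn : Odd n) (hn1 : 1 < n)
    (hs : Nat.gcd s n = 1)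
    (F : Type) [Field F] [Fintype F] (hF : Fintype.card F = q ^ n) (δ : F)
    (hδ : δ ^ ((q ^ n - 1) / (q - 1)) = 1) :
    (∀ ρ : F, ρ ^ q ≠ ρ → ∃ x₀ : F, x₀ ≠ 0 ∧
        ((ρ * x₀) ^ q ^ (s * (n - 1)) + δ * (ρ * x₀) ^ q ^ s) / (ρ * x₀) =
          (x₀ ^ q ^ (s * (n - 1)) + δ * x₀ ^ q ^ s) / x₀) ∧
      ¬ (∀ y z : F, y ≠ 0 → z ≠ 0 →
          (y ^ q ^ (s * (n - 1)) + δ * y ^ q ^ s) / y =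
            (z ^ q ^ (s * (n - 1)) + δ * z ^ q ^ s) / z →
          (y / z) ^ q = y / z) := by
  classical
  obtain ⟨p, j, hp, hj0, hpj⟩ := hq
  have hp' : p.Prime := hp.nat_prime
  have hq2 : 2 ≤ q := by
    rw [← hpj]
    calc 2 ≤ p := hp'.two_le
    _ = p ^ 1 := (pow_one p).symm
    _ ≤ p ^ j := Nat.pow_le_pow_right hp'.pos hj0
  have hn0 : 0 < n := by omega
  have hs0 : 0 < s := by
    rcases Nat.eq_zero_or_pos s with h | h
    · rw [h, Nat.gcd_zero_left] at hs; omega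
    · exact h
  have hqn : 1 < q ^ n := Nat.one_lt_pow (by omega) (by omega)
  have hqq : q < q ^ n := by
    calc q = q ^ 1 := (pow_one q).symm
    _ < q ^ n := Nat.pow_lt_pow_right (by omega) hn1
  -- characteristic
  haveI : CharP F (ringChar F) := ringChar.charP F
  obtain ⟨d₀, hr, hcard'⟩ := FiniteField.card F (ringChar F)
  have hrp : ringChar F = p := by
    have h2 : Fintype.card F = p ^ (j * n) := by rw [hF, ← hpj, ← pow_mul]
    have h3 : ringChar F ^ (d₀ : ℕ) = p ^ (j * n) := hcard'.symm.trans h2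
    have h1 : ringChar F ∣ p ^ (j * n) := h3 ▸ dvd_pow_self (ringChar F) d₀.pos.ne'
    exact (Nat.prime_dvd_prime_iff_eq hr hp').1 (hr.dvd_of_dvd_pow h1)
  haveI hcharF : CharP F p := hrp ▸ ringChar.charP F
  haveI : Fact p.Prime := ⟨hp'⟩
  -- basic quantities
  set m := (q ^ n - 1) / (q - 1) with hmdef
  have hdvd : (q - 1) ∣ q ^ n - 1 := by simpa using Nat.sub_dvd_pow_sub_pow q 1 n
  have hmm : m * (q - 1) = q ^ n - 1 := Nat.div_mul_cancel hdvd
  have hmpos : 0 < m := by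
    rcases Nat.eq_zero_or_pos m with h | h
    · rw [h, zero_mul] at hmm; omega
    · exact h
  -- reduction of Frobenius exponents mod n
  have red : ∀ (x : F) (k r : ℕ), x ^ q ^ (k * n + r) = x ^ q ^ r := by
    intro x k r
    have e : q ^ (k * n + r) = (q ^ n) ^ k * q ^ r := by
      rw [pow_add, mul_comm k n, pow_mul]
    rw [e, pow_mul, ← hF, FiniteField.pow_card_pow]
  have red0 : ∀ (x : F) (k : ℕ), x ^ q ^ (k * n) = x := by
    intro x k
    simpa using red x k 0
  have e0 : s * (n - 1) + s = s * n := by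
    have h : n - 1 + 1 = n := Nat.sub_add_cancel (by omega)
    calc s * (n - 1) + s = s * ((n - 1) + 1) := by ring
    _ = s * n := by rw [h]
  -- norm facts
  have hNone : ∀ t : F, t ≠ 0 → t ^ (q ^ n - 1) = 1 := by
    intro t ht
    rw [← hF]
    exact FiniteField.pow_card_sub_one_eq_one t ht
  have hfrobm : ∀ t : F, t ≠ 0 → (t ^ q ^ s) ^ m = t ^ m := by
    intro t ht
    have h1 : (q - 1) ∣ q ^ s - 1 := by simpa using Nat.sub_dvd_pow_sub_pow q 1 s
    obtain ⟨i, hi⟩ := h1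
    have h2 : 1 ≤ q ^ s := Nat.one_le_pow _ _ (by omega)
    have e1 : q ^ s * m = (q ^ n - 1) * i + m := by
      calc q ^ s * m = (q ^ s - 1 + 1) * m := by rw [Nat.sub_add_cancel h2]
      _ = (q ^ s - 1) * m + m := by ring
      _ = (q ^ n - 1) * i + m := by rw [hi, ← hmm]; ring
    rw [← pow_mul, e1, pow_add, pow_mul, hNone t ht, one_pow, one_mul]
  -- the cyclic group of units
  obtain ⟨g, hg⟩ := IsCyclic.exists_generator (α := Fˣ)
  have hog : orderOf g = q ^ n - 1 := by
    rw [orderOf_eq_card_of_forall_mem_zpowers hg, Nat.card_eq_fintype_card, Fintype.card_units, hF]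
  have hgN : g ^ ((q ^ n - 1 : ℕ) : ℤ) = 1 := by
    rw [zpow_natCast, ← hog, pow_orderOf_eq_one]
  -- gcd divisibility
  have hcop2s : Nat.gcd (2 * s) n = 1 := by
    have h2 : Nat.Coprime 2 n := by
      rcases hn with ⟨w, hw⟩
      have : ¬ (2 ∣ n) := by omega
      rcases Nat.coprime_or_dvd_of_prime Nat.prime_two n with h | h
      · exact h
      · exact absurd h this
    exact Nat.Coprime.mul h2 hs
  have hd : Nat.gcd (q ^ (2 * s) - 1) (q ^ n - 1) ∣ q - 1 :=
    LP_aux_gcd_dvd (by omega) hcop2s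
  -- existence of (q^(2s)-1)-th roots for norm-one elements
  have key : ∀ u : F, u ≠ 0 → u ^ m = 1 → ∃ v : F, v ≠ 0 ∧ v ^ (q ^ (2 * s) - 1) = u := by
    intro u hu hum
    obtain ⟨k, hk0⟩ := hg (Units.mk0 u hu)
    have hk : g ^ k = Units.mk0 u hu := hk0
    have hum' : (Units.mk0 u hu) ^ (m : ℤ) = 1 := by
      rw [zpow_natCast]
      ext
      simp [hum]
    have hkm : g ^ (k * (m : ℤ)) = 1 := by rw [zpow_mul, hk, hum']
    have hdvd1 : ((q ^ n - 1 : ℕ) : ℤ) ∣ k * m := by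
      rw [← hog]
      exact orderOf_dvd_iff_zpow_eq_one.2 hkm
    have hq1dvd : ((q - 1 : ℕ) : ℤ) ∣ k := by
      have h1 : ((m : ℤ) * ((q - 1 : ℕ) : ℤ)) ∣ (m : ℤ) * k := by
        have e : ((q ^ n - 1 : ℕ) : ℤ) = (m : ℤ) * ((q - 1 : ℕ) : ℤ) := by
          exact_mod_cast hmm.symm
        rw [← e]
        exact hdvd1.trans (dvd_of_eq (mul_comm k (m : ℤ)))
      exact (mul_dvd_mul_iff_left (by exact_mod_cast hmpos.ne')).1 h1
    obtain ⟨k', hk'⟩ := hq1dvd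
    set D := q ^ (2 * s) - 1 with hD
    obtain ⟨e, he⟩ := hd
    have hbez : (Nat.gcd D (q ^ n - 1) : ℤ) =
        (D : ℤ) * Nat.gcdA D (q ^ n - 1) + ((q ^ n - 1 : ℕ) : ℤ) * Nat.gcdB D (q ^ n - 1) :=
      Nat.gcd_eq_gcd_ab D (q ^ n - 1)
    refine ⟨((g ^ (Nat.gcdA D (q ^ n - 1) * e * k') : Fˣ) : F), Units.ne_zero _, ?_⟩
    have hec : ((q - 1 : ℕ) : ℤ) = (Nat.gcd D (q ^ n - 1) : ℤ) * (e : ℤ) := by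
      exact_mod_cast he
    have harith : (Nat.gcdA D (q ^ n - 1) * e * k') * (D : ℤ) = k + ((q ^ n - 1 : ℕ) : ℤ) *
        (-(Nat.gcdB D (q ^ n - 1) * e * k')) := by
      linear_combination (-(e : ℤ) * k') * hbez - k' * hec - hk'
    have hcalc : (g ^ (Nat.gcdA D (q ^ n - 1) * e * k')) ^ (D : ℤ) = g ^ k := by
      rw [← zpow_mul, harith, zpow_add, zpow_mul, hgN, one_zpow, mul_one]
    have hcalc2 : (g ^ (Nat.gcdA D (q ^ n - 1) * e * k')) ^ D = Units.mk0 u hu := by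
      rw [← zpow_natCast (g ^ (Nat.gcdA D (q ^ n - 1) * e * k')) D, hcalc, hk]
    calc ((g ^ (Nat.gcdA D (q ^ n - 1) * e * k') : Fˣ) : F) ^ D
        = (((g ^ (Nat.gcdA D (q ^ n - 1) * e * k')) ^ D : Fˣ) : F) :=
          (Units.val_pow_eq_pow_val _ _).symm
    _ = u := by rw [hcalc2]; rfl
  -- part 1
  have main : ∀ ρ : F, ρ ^ q ≠ ρ → ∃ x₀ : F, x₀ ≠ 0 ∧
      ((ρ * x₀) ^ q ^ (s * (n - 1)) + δ * (ρ * x₀) ^ q ^ s) / (ρ * x₀) =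
        (x₀ ^ q ^ (s * (n - 1)) + δ * x₀ ^ q ^ s) / x₀ := by
    intro ρ hρq
    have hρ0 : ρ ≠ 0 := by
      intro h
      apply hρq
      rw [h, zero_pow (by omega)]
    have hρs : ρ ^ q ^ s ≠ ρ := by
      intro h
      apply hρq
      obtain ⟨t, -, ht⟩ := Nat.exists_mul_mod_eq_one_of_coprime hs hn1
      have iter : ∀ i : ℕ, ρ ^ q ^ (s * i) = ρ := by
        intro i
        induction i with
        | zero => simp
        | succ i ih =>
          have e : q ^ (s * (i + 1)) = q ^ (s * i) * q ^ s := by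
            rw [← pow_add]; ring_nf
          rw [e, pow_mul, ih, h]
      have e2 : s * t = (s * t / n) * n + 1 := by
        calc s * t = n * (s * t / n) + s * t % n := (Nat.div_add_mod _ _).symm
        _ = (s * t / n) * n + 1 := by rw [ht, Nat.mul_comm]
      have h3 := iter t
      rw [e2, red ρ (s * t / n) 1, pow_one] at h3
      exact h3
    have ha : ρ - ρ ^ q ^ s ≠ 0 := sub_ne_zero.2 (fun h => hρs h.symm)
    -- b ^ (q^s) = a
    have hqs_pj : q ^ s = p ^ (j * s) := by rw [← hpj, ← pow_mul]
    have hbq : (ρ ^ q ^ (s * (n - 1)) - ρ) ^ q ^ s = ρ - ρ ^ q ^ s := by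
      rw [hqs_pj, sub_pow_char_pow, ← hqs_pj]
      congr 1
      rw [← pow_mul, ← pow_add, e0, red0 ρ s]
    have hb : ρ ^ q ^ (s * (n - 1)) - ρ ≠ 0 := by
      intro h
      rw [h, zero_pow (by positivity)] at hbq
      exact ha hbq.symm
    have hδ0 : δ ≠ 0 := by
      intro h
      rw [h, zero_pow hmpos.ne'] at hδ
      exact zero_ne_one hδ
    set c : F := δ * (ρ - ρ ^ q ^ s) / (ρ ^ q ^ (s * (n - 1)) - ρ) with hc
    have hc0 : c ≠ 0 := by
      rw [hc]
      exact div_ne_zero (mul_ne_zero hδ0 ha) hb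
    have hcm : c ^ m = 1 := by
      rw [hc, div_pow, mul_pow, hδ, one_mul, ← hbq, hfrobm _ hb, div_self (pow_ne_zero _ hb)]
    have hum : (c⁻¹ ^ q ^ s) ^ m = 1 := by
      rw [hfrobm _ (inv_ne_zero hc0), inv_pow, hcm, inv_one]
    obtain ⟨v, hv0, hv⟩ := key (c⁻¹ ^ q ^ s) (pow_ne_zero _ (inv_ne_zero hc0)) hum
    -- v ^ (q^(2s)) * c ^ (q^s) = v
    have h2s : 1 ≤ q ^ (2 * s) := Nat.one_le_pow _ _ (by omega)
    have hv2 : v ^ q ^ (2 * s) * c ^ q ^ s = v := by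
      have e : q ^ (2 * s) = (q ^ (2 * s) - 1) + 1 := by omega
      rw [e, pow_add, pow_one, hv]
      rw [inv_pow, mul_assoc, mul_comm (v), ← mul_assoc, inv_mul_cancel₀ (pow_ne_zero _ hc0)]
      ring
    -- main identity: v ^ (q^(s(n-1))) = c * v ^ (q^s)
    have hmain : v ^ q ^ (s * (n - 1)) = c * v ^ q ^ s := by
      have e1 : 2 * s + s * (n - 1) = s * n + s := by linarith [e0]
      have e2 : s + s * (n - 1) = s * n := by linarith [e0]
      calc v ^ q ^ (s * (n - 1)) = (v ^ q ^ (2 * s) * c ^ q ^ s) ^ q ^ (s * (n - 1)) := by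
            rw [hv2]
      _ = v ^ (q ^ (2 * s) * q ^ (s * (n - 1))) * c ^ (q ^ s * q ^ (s * (n - 1))) := by
            rw [mul_pow, ← pow_mul v, ← pow_mul c]
      _ = v ^ q ^ (2 * s + s * (n - 1)) * c ^ q ^ (s + s * (n - 1)) := by
            rw [← pow_add, ← pow_add]
      _ = v ^ q ^ (s * n + s) * c ^ q ^ (s * n) := by rw [e1, e2]
      _ = v ^ q ^ s * c := by rw [red v s s, red0 c s]
      _ = c * v ^ q ^ s := mul_comm _ _
    refine ⟨v, hv0, ?_⟩
    rw [div_eq_div_iff (mul_ne_zero hρ0 hv0) hv0]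
    have hkey : (ρ ^ q ^ (s * (n - 1)) - ρ) * v ^ q ^ (s * (n - 1)) =
        δ * (ρ - ρ ^ q ^ s) * v ^ q ^ s := by
      rw [hmain, hc]
      field_simp
    rw [mul_pow, mul_pow]
    linear_combination v * hkey
  refine ⟨main, ?_⟩
  intro hscat
  have hρex : ∃ ρ : F, ρ ^ q ≠ ρ := by
    refine ⟨(g : F), ?_⟩
    intro h
    have h1 : g ^ q = g := by
      ext
      rw [Units.val_pow_eq_pow_val]
      exact h
    have h2 : g ^ (q - 1) = 1 := by
      have e : q = (q - 1) + 1 := by omega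
      rw [e, pow_add, pow_one] at h1
      exact mul_right_cancel (h1.trans (one_mul g).symm)
    have h3 := orderOf_dvd_of_pow_eq_one h2
    rw [hog] at h3
    have h4 := Nat.le_of_dvd (by omega) h3
    omega
  obtain ⟨ρ, hρq⟩ := hρex
  obtain ⟨x₀, hx0, heq⟩ := main ρ hρq
  have hρ0 : ρ ≠ 0 := by
    intro h
    apply hρq
    rw [h, zero_pow (by omega)]
  have h5 := hscat (ρ * x₀) x₀ (mul_ne_zero hρ0 hx0) hx0 heq
  rw [mul_div_assoc, div_self hx0, mul_one] at h5
  exact hρq h5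
end

section
/- Let f be an F_q-linearized polynomial over F_{q^n} with adjoint f̂ (with respect to the trace bilinear form). Then f is R-q^t-partially scattered if and only if f̂ is R-q^t-partially scattered. -/
open Finset Polynomial

section PSaux

variable {q n : ℕ} {F : Type} [Field F] [Fintype F]

/-- The trace `x ↦ ∑_{j<n} x^{q^j}`. -/
private def trc (q n : ℕ) {F : Type} [Field F] (x : F) : F :=
  ∑ j ∈ Finset.range n, x ^ q ^ j

private lemma PS_add (hq : IsPrimePow q) (hF : Fintype.card F = q ^ n)
    (m : ℕ) (x y : F) : (x + y) ^ q ^ m = x ^ q ^ m + y ^ q ^ m := by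
  obtain ⟨p, k, hp, hk, rfl⟩ := hq
  have hp' : p.Prime := Nat.prime_iff.mpr hp
  have hchar : CharP F (ringChar F) := ringChar.charP F
  have hrp : ringChar F = p := by
    have h1 : (ringChar F).Prime := CharP.char_is_prime F (ringChar F)
    have h2 : ringChar F ∣ p ^ (k * n) := by
      rw [← CharP.cast_eq_zero_iff F (ringChar F)]
      rw [pow_mul, ← hF]
      exact Nat.cast_card_eq_zero F
    exact (Nat.prime_dvd_prime_iff_eq h1 hp').mp (h1.dvd_of_dvd_pow h2)
  haveI : CharP F p := hrp ▸ hchar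
  haveI := Fact.mk hp'
  rw [← pow_mul]
  exact add_pow_char_pow x y p (k * m)

private lemma PS_trc_zero (hq : IsPrimePow q) : trc q n (0 : F) = 0 := by
  have : q ≠ 0 := by have := hq.two_le; omega
  simp [trc, zero_pow (pow_ne_zero _ this)]

private lemma PS_trc_add (hq : IsPrimePow q) (hF : Fintype.card F = q ^ n)
    (x y : F) : trc q n (x + y) = trc q n x + trc q n y := by
  unfold trc
  rw [← Finset.sum_add_distrib]
  exact Finset.sum_congr rfl fun j _ => PS_add hq hF j x y

private lemma PS_trc_neg (hq : IsPrimePow q) (hF : Fintype.card F = q ^ n)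
    (x : F) : trc q n (-x) = -trc q n x := by
  have h := PS_trc_add hq hF x (-x)
  rw [add_neg_cancel, PS_trc_zero hq] at h
  linear_combination -h

private lemma PS_trc_sub (hq : IsPrimePow q) (hF : Fintype.card F = q ^ n)
    (x y : F) : trc q n (x - y) = trc q n x - trc q n y := by
  rw [sub_eq_add_neg, PS_trc_add hq hF, PS_trc_neg hq hF, sub_eq_add_neg]

private lemma PS_trc_sum (hq : IsPrimePow q) (hF : Fintype.card F = q ^ n)
    {ι : Type*} (s : Finset ι) (f : ι → F) :
    trc q n (∑ i ∈ s, f i) = ∑ i ∈ s, trc q n (f i) := by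
  classical
  induction s using Finset.induction_on with
  | empty => simp [PS_trc_zero hq]
  | insert a s hx ih =>
                    rw [Finset.sum_insert hx, Finset.sum_insert hx, PS_trc_add hq hF, ih]

private lemma PS_pow_card (hF : Fintype.card F = q ^ n) (x : F) : x ^ q ^ n = x := by
  rw [← hF]; exact FiniteField.pow_card x

private lemma PS_trc_frob (hq : IsPrimePow q) (hn : 0 < n) (hF : Fintype.card F = q ^ n)
    (x : F) : trc q n (x ^ q) = trc q n x := by
  obtain ⟨m, rfl⟩ : ∃ m, n = m + 1 := ⟨n - 1, (Nat.succ_pred_eq_of_pos hn).symm⟩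
  unfold trc
  have h1 : ∀ j : ℕ, (x ^ q) ^ q ^ j = x ^ q ^ (j + 1) := by
    intro j
    rw [← pow_mul, ← pow_succ']
  calc ∑ j ∈ Finset.range (m + 1), (x ^ q) ^ q ^ j
      = ∑ j ∈ Finset.range (m + 1), x ^ q ^ (j + 1) := by
        exact Finset.sum_congr rfl fun j _ => h1 j
    _ = (∑ j ∈ Finset.range m, x ^ q ^ (j + 1)) + x ^ q ^ (m + 1) := Finset.sum_range_succ _ _
    _ = (∑ j ∈ Finset.range m, x ^ q ^ (j + 1)) + x ^ q ^ 0 := by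
        rw [PS_pow_card hF, pow_zero, pow_one]
    _ = ∑ j ∈ Finset.range (m + 1), x ^ q ^ j := (Finset.sum_range_succ' (fun j => x ^ q ^ j) m).symm

private lemma PS_trc_frob_pow (hq : IsPrimePow q) (hn : 0 < n) (hF : Fintype.card F = q ^ n)
    (m : ℕ) (x : F) : trc q n (x ^ q ^ m) = trc q n x := by
  induction m with
  | zero => rw [pow_zero, pow_one]
  | succ m ih =>
      rw [pow_succ, pow_mul, PS_trc_frob hq hn hF, ih]

/-- The fundamental adjoint property. -/
private lemma PS_adjoint (hq : IsPrimePow q) (hn : 0 < n) (hF : Fintype.card F = q ^ n)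
    (a : Fin n → F) (y z : F) :
    trc q n (y * ∑ i : Fin n, a i * z ^ q ^ (i : ℕ)) =
      trc q n (z * ∑ i : Fin n, a i ^ q ^ (n - (i : ℕ)) * y ^ q ^ (n - (i : ℕ))) := by
  rw [Finset.mul_sum, Finset.mul_sum, PS_trc_sum hq hF, PS_trc_sum hq hF]
  refine Finset.sum_congr rfl fun i _ => ?_
  have hin : (i : ℕ) + (n - (i : ℕ)) = n := Nat.add_sub_cancel' i.isLt.le
  calc trc q n (y * (a i * z ^ q ^ (i : ℕ)))
      = trc q n ((y * (a i * z ^ q ^ (i : ℕ))) ^ q ^ (n - (i : ℕ))) :=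
        (PS_trc_frob_pow hq hn hF _ _).symm
    _ = trc q n (z * (a i ^ q ^ (n - (i : ℕ)) * y ^ q ^ (n - (i : ℕ)))) := by
        congr 1
        rw [mul_pow, mul_pow, ← pow_mul, ← pow_add, hin, PS_pow_card hF]
        ring

/-- The trace is not identically zero. -/
private lemma PS_exists_trc_ne (hq : IsPrimePow q) (hn : 0 < n) (hF : Fintype.card F = q ^ n) :
    ∃ w : F, trc q n w ≠ 0 := by
  by_contra h
  push_neg at h
  set P : F[X] := ∑ j ∈ Finset.range n, (X : F[X]) ^ q ^ j with hP
  have heval : ∀ w : F, P.eval w = trc q n w := by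
    intro w
    simp [hP, trc, Polynomial.eval_finset_sum]
  have hdeg : P.natDegree ≤ q ^ (n - 1) := by
    refine Polynomial.natDegree_sum_le_of_forall_le _ _ fun j hj => ?_
    rw [Polynomial.natDegree_X_pow]
    exact Nat.pow_le_pow_right hq.one_lt.le (by simp only [Finset.mem_range] at hj; omega)
  have hP0 : P = 0 := by
    refine Polynomial.eq_zero_of_natDegree_lt_card_of_eval_eq_zero P Function.injective_id
      (fun w => by rw [heval, h]) ?_
    rw [hF]
    calc P.natDegree ≤ q ^ (n - 1) := hdeg
      _ < q ^ n := Nat.pow_lt_pow_right hq.two_le (by omega)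
  have hc : P.coeff (q ^ (n - 1)) = 1 := by
    rw [hP, Polynomial.finset_sum_coeff]
    have : ∀ j ∈ Finset.range n,
        ((X : F[X]) ^ q ^ j).coeff (q ^ (n - 1)) = if j = n - 1 then 1 else 0 := by
      intro j hj
      rw [Polynomial.coeff_X_pow]
      by_cases hje : j = n - 1
      · simp [hje]
      · have : q ^ (n - 1) ≠ q ^ j := fun hc =>
          hje (Nat.pow_right_injective hq.two_le hc).symm
        simp [this, hje]
    rw [Finset.sum_congr rfl this, Finset.sum_ite_eq' (Finset.range n) (n - 1)]
    simp [Finset.mem_range]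
    omega
  rw [hP0] at hc
  simp at hc

private lemma PS_nondeg (hq : IsPrimePow q) (hn : 0 < n) (hF : Fintype.card F = q ^ n)
    {x : F} (hx : x ≠ 0) : ∃ y : F, trc q n (x * y) ≠ 0 := by
  obtain ⟨w, hw⟩ := PS_exists_trc_ne hq hn hF (F := F)
  exact ⟨x⁻¹ * w, by rwa [← mul_assoc, mul_inv_cancel₀ hx, one_mul]⟩

/-- Key duality lemma: if the adjoint relation holds and `g` has trivial kernel,
then `h` has trivial kernel. -/
private lemma PS_dual (hq : IsPrimePow q) (hn : 0 < n) (hF : Fintype.card F = q ^ n)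
    (g h : F → F) (hg : ∀ a b : F, g (a + b) = g a + g b)
    (Hadj : ∀ y z : F, trc q n (y * g z) = trc q n (z * h y))
    (Hker : ∀ z : F, g z = 0 → z = 0) :
    ∀ y : F, h y = 0 → y = 0 := by
  have hg0 : g 0 = 0 := by
    have h0 := hg 0 0
    rw [add_zero] at h0
    exact (left_eq_add.mp h0)
  have hgneg : ∀ b : F, g (-b) = -g b := by
    intro b
    have h0 := hg b (-b)
    rw [add_neg_cancel, hg0] at h0
    linear_combination -h0
  have hginj : Function.Injective g := by
    intro a b hab
    have : g (a + -b) = 0 := by rw [hg, hgneg, hab, add_neg_cancel]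
    have := Hker _ this
    linear_combination this
  have hgsurj : Function.Surjective g := Finite.injective_iff_surjective.mp hginj
  intro y hy
  by_contra hy0
  obtain ⟨v, hv⟩ := PS_nondeg hq hn hF hy0
  obtain ⟨z, hz⟩ := hgsurj v
  have := Hadj y z
  rw [hz, hy, mul_zero, PS_trc_zero hq] at this
  exact hv this

/-- Reformulation of the partial scattering condition in kernel terms. -/
private lemma PS_reform (t : ℕ) (hq : IsPrimePow q) (f' : F → F) :
    (∀ y z : F, y ≠ 0 → z ≠ 0 → f' y / y = f' z / z →
        (y / z) ^ q ^ t = y / z → (y / z) ^ q = y / z) ↔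
      (∀ ρ : F, ρ ^ q ^ t = ρ → ρ ^ q ≠ ρ → ∀ x : F, f' (ρ * x) - ρ * f' x = 0 → x = 0) := by
  have hq0 : q ≠ 0 := by have := hq.two_le; omega
  constructor
  · intro H ρ hρt hρq x hker
    by_contra hx
    have hρ0 : ρ ≠ 0 := by
      rintro rfl
      exact hρq (by rw [zero_pow hq0])
    have hy : ρ * x ≠ 0 := mul_ne_zero hρ0 hx
    have hdiv : (ρ * x) / x = ρ := by
      field_simp
    have heq : f' (ρ * x) / (ρ * x) = f' x / x := by
      have h1 : f' (ρ * x) = ρ * f' x := by linear_combination hker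
      rw [h1, mul_div_mul_left _ _ hρ0]
    have := H (ρ * x) x hy hx heq (by rw [hdiv]; exact hρt)
    rw [hdiv] at this
    exact hρq this
  · intro H y z hy hz hratio hqt
    by_contra hq'
    have hz0 : z ≠ 0 := hz
    refine hz (H (y / z) hqt hq' z ?_)
    have h1 : y / z * z = y := div_mul_cancel₀ y hz
    rw [h1]
    rw [div_eq_div_iff hy hz] at hratio
    field_simp
    linear_combination hratio

end PSaux

/-- `f(x) = ∑ a_i x^{q^i}` is R-`q^t`-partially scattered iff its adjoint
`f̂(x) = ∑ a_i^{q^{n-i}} x^{q^{n-i}}` is R-`q^t`-partially scattered. -/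
theorem adjoint_R_partially_scattered_iff (q n t : ℕ) (hq : IsPrimePow q) (hn : 0 < n)
    (ht : t ∣ n)
    (F : Type) [Field F] [Fintype F] (hF : Fintype.card F = q ^ n) (a : Fin n → F) :
    (∀ y z : F, y ≠ 0 → z ≠ 0 →
        (∑ i : Fin n, a i * y ^ q ^ (i : ℕ)) / y = (∑ i : Fin n, a i * z ^ q ^ (i : ℕ)) / z →
        (y / z) ^ q ^ t = y / z → (y / z) ^ q = y / z) ↔
      (∀ y z : F, y ≠ 0 → z ≠ 0 →
        (∑ i : Fin n, (a i) ^ q ^ (n - (i : ℕ)) * y ^ q ^ (n - (i : ℕ))) / y =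
          (∑ i : Fin n, (a i) ^ q ^ (n - (i : ℕ)) * z ^ q ^ (n - (i : ℕ))) / z →
        (y / z) ^ q ^ t = y / z → (y / z) ^ q = y / z) := by
  -- the linearized polynomial and its adjoint
  set f : F → F := fun x => ∑ i : Fin n, a i * x ^ q ^ (i : ℕ) with hf
  set fh : F → F := fun x => ∑ i : Fin n, a i ^ q ^ (n - (i : ℕ)) * x ^ q ^ (n - (i : ℕ)) with hfh
  -- additivity
  have hfadd : ∀ x y : F, f (x + y) = f x + f y := by
    intro x y
    simp only [hf]
    rw [← Finset.sum_add_distrib]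
    exact Finset.sum_congr rfl fun i _ => by rw [PS_add hq hF, mul_add]
  have hfhadd : ∀ x y : F, fh (x + y) = fh x + fh y := by
    intro x y
    simp only [hfh]
    rw [← Finset.sum_add_distrib]
    exact Finset.sum_congr rfl fun i _ => by rw [PS_add hq hF, mul_add]
  -- adjoint relation
  have Hadj : ∀ y z : F, trc q n (y * f z) = trc q n (z * fh y) :=
    fun y z => PS_adjoint hq hn hF a y z
  rw [PS_reform t hq f, PS_reform t hq fh]
  refine forall_congr' fun ρ => imp_congr_right fun hρt => imp_congr_right fun hρq => ?_
  -- kernels of f(ρx) - ρ f(x) and fh(ρx) - ρ fh(x) are simultaneously trivial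
  set g : F → F := fun x => f (ρ * x) - ρ * f x with hg
  set h : F → F := fun x => ρ * fh x - fh (ρ * x) with hh
  have hgadd : ∀ a b : F, g (a + b) = g a + g b := by
    intro a b
    simp only [hg, mul_add, hfadd]
    ring
  have hhadd : ∀ a b : F, h (a + b) = h a + h b := by
    intro a b
    simp only [hh, mul_add, hfhadd]
    ring
  have Hadj_gh : ∀ y z : F, trc q n (y * g z) = trc q n (z * h y) := by
    intro y z
    have e1 : y * g z = y * f (ρ * z) - (ρ * y) * f z := by simp only [hg]; ring
    have e2 : z * h y = (ρ * z) * fh y - z * fh (ρ * y) := by simp only [hh]; ring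
    rw [e1, e2, PS_trc_sub hq hF, PS_trc_sub hq hF]
    congr 1
    · exact Hadj y (ρ * z)
    · exact Hadj (ρ * y) z
  have Hadj_hg : ∀ y z : F, trc q n (y * h z) = trc q n (z * g y) := by
    intro y z
    have e1 : y * h z = (ρ * y) * fh z - y * fh (ρ * z) := by simp only [hh]; ring
    have e2 : z * g y = z * f (ρ * y) - (ρ * z) * f y := by simp only [hg]; ring
    rw [e1, e2, PS_trc_sub hq hF, PS_trc_sub hq hF]
    congr 1
    · exact (Hadj z (ρ * y)).symm
    · exact (Hadj (ρ * z) y).symm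
  have key : (∀ x : F, g x = 0 → x = 0) ↔ (∀ x : F, h x = 0 → x = 0) :=
    ⟨PS_dual hq hn hF g h hgadd Hadj_gh, PS_dual hq hn hF h g hhadd Hadj_hg⟩
  have hneg : ∀ x : F, fh (ρ * x) - ρ * fh x = -h x := fun x => by simp only [hh]; ring
  constructor
  · intro H x hx
    exact key.mp H x (by rw [← neg_eq_zero, ← hneg]; exact hx)
  · intro H x hx
    refine key.mpr ?_ x hx
    intro w hw
    exact H w (by rw [hneg, hw, neg_zero])
end

section
/- Let n = t·t′ with t > 1, s, k > 0, gcd(s,t) = 1, kt+s < n, and α ∈ F_{q^n}^* with N_{q^n/q^{t·gcd(k,t′)}}(−α) ≠ 1. Then for every a ∈ F_{q^{t·gcd(k,t′)}}^*, the diagonal matrix diag(a, a^{q^s}) belongs to the linear automorphism group of f(x) = x^{q^{kt+s}} + α x^{q^s}; that is, for every x ∈ F_{q^n} there exists y ∈ F_{q^n} with a x = y and a^{q^s} f(x) = f(y). -/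
lemma pow_pow_fixed {F : Type} [Monoid F] (a : F) (N : ℕ) (h : a ^ N = a) :
    ∀ m : ℕ, a ^ N ^ m = a := by
  intro m
  induction m with
  | zero => simp
  | succ m ih => rw [pow_succ, pow_mul, ih, h]

/-- For `f(x) = x^{q^{kt+s}} + α x^{q^s}` and every `a ∈ F_{q^{t·gcd(k,t')}}^*`,
the matrix `diag(a, a^{q^s})` belongs to the linear automorphism group of `f`,
i.e. `f(a x) = a^{q^s} f(x)` for all `x`. -/
theorem binomial_automorphism_group_contains (q t t' s k : ℕ) (hq : IsPrimePow q)
    (ht : 1 < t) (ht' : 0 < t') (hs0 : 0 < s) (hk : 0 < k) (hs : Nat.gcd s t = 1)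
    (hlt : k * t + s < t * t')
    (F : Type) [Field F] [Fintype F] (hF : Fintype.card F = q ^ (t * t')) (α : F)
    (hα : α ≠ 0)
    (hnorm : (-α) ^ ((q ^ (t * t') - 1) / (q ^ (t * Nat.gcd k t') - 1)) ≠ 1) :
    ∀ a : F, a ≠ 0 → a ^ q ^ (t * Nat.gcd k t') = a →
      ∀ x : F, (a * x) ^ q ^ (k * t + s) + α * (a * x) ^ q ^ s =
        a ^ q ^ s * (x ^ q ^ (k * t + s) + α * x ^ q ^ s) := by
  intro a ha hfix x
  have hdvd : Nat.gcd k t' ∣ k := Nat.gcd_dvd_left k t'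
  obtain ⟨m, hm⟩ := hdvd
  have hkt : a ^ q ^ (k * t) = a := by
    have hkt' : k * t = t * Nat.gcd k t' * m := by
      conv_lhs => rw [hm]
      ring
    rw [hkt', pow_mul]
    exact pow_pow_fixed a _ hfix m
  have key : a ^ q ^ (k * t + s) = a ^ q ^ s := by
    rw [pow_add, pow_mul, hkt]
  rw [mul_pow, mul_pow, key]
  ring
end
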